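/- Let J ⊆ K[x_1,…,x_m] be an ideal generated by binomials containing no binomial of the form x^u − 1 with u ≠ 0. Then ara_c(J) ≥ δ(Δ_J)_ℕ, i.e., the J-complete arithmetical rank of J is at least the minimum cardinality of a maximal ℕ-matching (a matching by simplices of arbitrary dimension) in the simplicial complex Δ_J. -/

import Mathlib

open MvPolynomial

noncomputable section

/-- A binomial is a difference of two monomials `x^u − x^v`. -/
def IsBinomial {K : Type*} [Field K] {m : ℕ} (f : MvPolynomial (Fin m) K) : Prop :=
  ∃ u v : Fin m →₀ ℕ, f = monomial u (1 : K) - monomial v 1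

/-- A monomial `x^u` is an indispensable monomial of `J` if every set of binomials
generating `J` contains a binomial having `x^u` as one of its two monomials. -/
def IsIndispensableMonomial {K : Type*} [Field K] {m : ℕ}
    (J : Ideal (MvPolynomial (Fin m) K)) (u : Fin m →₀ ℕ) : Prop :=
  ∀ S : Set (MvPolynomial (Fin m) K), (∀ f ∈ S, IsBinomial f) → Ideal.span S = J →
    ∃ v : Fin m →₀ ℕ,
      (monomial u (1 : K) - monomial v 1) ∈ S ∨ (monomial v (1 : K) - monomial u 1) ∈ S

/-- `T_min`: the set of minimal elements (under inclusion) among the supports of the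
indispensable monomials of `J`. -/
def Tmin {K : Type*} [Field K] {m : ℕ} (J : Ideal (MvPolynomial (Fin m) K)) :
    Set (Finset (Fin m)) :=
  {E | (∃ u : Fin m →₀ ℕ, IsIndispensableMonomial J u ∧ u.support = E) ∧
    ∀ E' : Finset (Fin m), (∃ u : Fin m →₀ ℕ, IsIndispensableMonomial J u ∧ u.support = E') →
      E' ⊆ E → E' = E}

/-- A nonempty finite set `T ⊆ T_min` is a simplex of `Δ_J` if there are monomials `M_E`,
`E ∈ T`, with `supp(M_E) = E` and `M_E − M_{E'} ∈ J` for all `E, E' ∈ T`. -/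
def IsSimplex {K : Type*} [Field K] {m : ℕ} (J : Ideal (MvPolynomial (Fin m) K))
    (T : Finset (Finset (Fin m))) : Prop :=
  T.Nonempty ∧ (∀ E ∈ T, E ∈ Tmin J) ∧
  ∃ M : Finset (Fin m) → (Fin m →₀ ℕ),
    (∀ E ∈ T, (M E).support = E) ∧
    (∀ E ∈ T, ∀ E' ∈ T, (monomial (M E) (1 : K) - monomial (M E') 1) ∈ J)

/-- A `Q`-matching in `Δ_J`: a finite set of pairwise disjoint simplices of `Δ_J` whose
dimensions (cardinality minus one) all lie in `Q`. -/
def IsQMatching {K : Type*} [Field K] {m : ℕ} (J : Ideal (MvPolynomial (Fin m) K))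
    (Q : Set ℕ) (N : Finset (Finset (Finset (Fin m)))) : Prop :=
  (∀ T ∈ N, IsSimplex J T ∧ (T.card - 1) ∈ Q) ∧
  (∀ T ∈ N, ∀ T' ∈ N, T ≠ T' → Disjoint T T')

/-- A maximal `Q`-matching: one whose support (union of its simplices) has the maximum
possible cardinality among all `Q`-matchings. -/
def IsMaximalQMatching {K : Type*} [Field K] {m : ℕ} (J : Ideal (MvPolynomial (Fin m) K))
    (Q : Set ℕ) (N : Finset (Finset (Finset (Fin m)))) : Prop :=
  IsQMatching J Q N ∧
  ∀ N' : Finset (Finset (Finset (Fin m))), IsQMatching J Q N' →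
    (N'.sup id).card ≤ (N.sup id).card

/-- `δ(Δ_J)_Q`: the minimum cardinality of a maximal `Q`-matching in `Δ_J`. -/
def deltaQ {K : Type*} [Field K] {m : ℕ} (J : Ideal (MvPolynomial (Fin m) K))
    (Q : Set ℕ) : ℕ :=
  sInf {s | ∃ N : Finset (Finset (Finset (Fin m))), IsMaximalQMatching J Q N ∧ N.card = s}

/-- A polynomial `F` is `I`-complete if for any two monomials `M, N` occurring in `F`
with nonzero coefficient, `M − N ∈ I`. -/
def IsCompletePolynomial {K : Type*} [Field K] {m : ℕ} (I : Ideal (MvPolynomial (Fin m) K))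
    (F : MvPolynomial (Fin m) K) : Prop :=
  ∀ u ∈ F.support, ∀ v ∈ F.support, (monomial u (1 : K) - monomial v 1) ∈ I

/-- The `I`-complete arithmetical rank: the smallest `s` such that there are `s`
`I`-complete polynomials in `I` generating `I` up to radical. -/
def araC {K : Type*} [Field K] {m : ℕ} (I : Ideal (MvPolynomial (Fin m) K)) : ℕ :=
  sInf {s | ∃ F : Fin s → MvPolynomial (Fin m) K,
    (∀ i, F i ∈ I ∧ IsCompletePolynomial I (F i)) ∧
    (Ideal.span (Set.range F)).radical = I.radical}

namespace Stmt2Aux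



variable {K : Type*} [Field K] {m : ℕ}

/-- removing 0 from a generating set doesn't change the span -/
lemma span_diff_zero (S : Set (MvPolynomial (Fin m) K)) :
    Ideal.span (S \ {0}) = Ideal.span S := by
  apply le_antisymm
  · exact Ideal.span_mono Set.diff_subset
  · rw [Ideal.span_le]
    intro f hf
    by_cases h : f = 0
    · simp [h]
    · exact Ideal.subset_span ⟨hf, h⟩

/-- a binomial ideal is contained in the kernel of evaluation at the all-ones point -/
lemma eval_one_eq_zero {J : Ideal (MvPolynomial (Fin m) K)}
    {S₀ : Set (MvPolynomial (Fin m) K)} (hS₀ : ∀ f ∈ S₀, IsBinomial f)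
    (hJ : J = Ideal.span S₀) {g : MvPolynomial (Fin m) K} (hg : g ∈ J) :
    eval (fun _ => (1 : K)) g = 0 := by
  have : J ≤ RingHom.ker (eval (fun _ => (1 : K))) := by
    rw [hJ, Ideal.span_le]
    intro f hf
    obtain ⟨u, v, rfl⟩ := hS₀ f hf
    simp [RingHom.mem_ker, eval_monomial, Finsupp.prod]
  simpa [RingHom.mem_ker] using this hg

/-- weight of an exponent vector -/
def wt (a : Fin m →₀ ℕ) : ℕ := ∑ i, a i

lemma wt_lt_wt {a b : Fin m →₀ ℕ} (hle : a ≤ b) (hne : a ≠ b) : wt a < wt b := by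
  rw [Finsupp.le_def] at hle
  have hex : ∃ i ∈ Finset.univ, a i < b i := by
    by_contra h
    push_neg at h
    exact hne (Finsupp.ext fun i => le_antisymm (hle i) (h i (Finset.mem_univ i)))
  exact Finset.sum_lt_sum (fun i _ => hle i) hex

/-- the ideal of polynomials avoiding all exponents satisfying a downward-closed condition -/
def avoidIdeal (cond : (Fin m →₀ ℕ) → Prop)
    (hcond : ∀ c' c : Fin m →₀ ℕ, c' ≤ c → cond c → cond c') :
    Ideal (MvPolynomial (Fin m) K) where
  carrier := {G | ∀ c, cond c → coeff c G = 0}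
  zero_mem' := fun c _ => by simp
  add_mem' := by
    intro a b ha hb c hc
    rw [coeff_add, ha c hc, hb c hc, add_zero]
  smul_mem' := by
    intro r G hG c hc
    rw [smul_eq_mul, coeff_mul]
    apply Finset.sum_eq_zero
    intro x hx
    rw [Finset.HasAntidiagonal.mem_antidiagonal] at hx
    have hx2 : x.2 ≤ c := by
      rw [← hx]; exact le_add_self
    rw [hG x.2 (hcond x.2 c hx2 hc), mul_zero]

lemma mem_avoidIdeal_iff {cond : (Fin m →₀ ℕ) → Prop} {hcond} (G : MvPolynomial (Fin m) K) :
    G ∈ avoidIdeal cond hcond ↔ ∀ c, cond c → coeff c G = 0 := Iff.rfl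
variable {K : Type*} [Field K] {m : ℕ}

/-- Core lemma: if `E ∈ Tmin J`, no exponent with support strictly inside `E` is
nontrivially related to another monomial modulo `J`. -/
lemma P_empty {J : Ideal (MvPolynomial (Fin m) K)} {E : Finset (Fin m)}
    (hE : E ∈ Tmin J) :
    ¬ ∃ (a a' : Fin m →₀ ℕ), a.support ⊂ E ∧ a' ≠ a ∧
      (monomial a (1 : K) - monomial a' 1) ∈ J := by
  intro hP
  set P : (Fin m →₀ ℕ) → Prop := fun a => a.support ⊂ E ∧ ∃ a', a' ≠ a ∧
      (monomial a (1:K) - monomial a' 1) ∈ J with hPdef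
  have hD : {n | ∃ a, P a ∧ wt a = n}.Nonempty := by
    obtain ⟨a, a', h1, h2, h3⟩ := hP
    exact ⟨wt a, a, ⟨h1, a', h2, h3⟩, rfl⟩
  obtain ⟨b, hbP, hwb⟩ := Nat.sInf_mem hD
  have hmin : ∀ p, P p → wt b ≤ wt p := by
    intro p hp
    rw [hwb]
    exact Nat.sInf_le ⟨p, hp, rfl⟩
  -- `b` is an indispensable monomial of `J`
  have hbind : IsIndispensableMonomial J b := by
    intro S hSbin hSspan
    by_contra hcon
    push_neg at hcon
    have hcond : ∀ c' c : Fin m →₀ ℕ, c' ≤ c → c ≤ b → c' ≤ b :=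
      fun _ _ h1 h2 => le_trans h1 h2
    have hSsub : S ⊆ ↑(avoidIdeal (K := K) (fun c => c ≤ b) hcond) := by
      intro f hfS
      obtain ⟨p, q, rfl⟩ := hSbin f hfS
      intro c hc
      by_cases hpq : p = q
      · subst hpq; simp
      have hmem : (monomial p (1:K) - monomial q 1) ∈ J :=
        hSspan ▸ Ideal.subset_span hfS
      have hpc : p ≠ c := by
        rintro rfl
        rcases eq_or_ne p b with rfl | hpb
        · exact (hcon q).1 hfS
        · have hPp : P p := ⟨lt_of_le_of_lt (Finsupp.support_mono hc) hbP.1,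
            q, fun h => hpq h.symm, hmem⟩
          exact absurd (hmin p hPp) (not_le.mpr (wt_lt_wt hc hpb))
      have hqc : q ≠ c := by
        rintro rfl
        have hmem' : (monomial q (1:K) - monomial p 1) ∈ J := by
          have := J.neg_mem hmem
          rwa [neg_sub] at this
        rcases eq_or_ne q b with rfl | hqb
        · exact (hcon p).2 hfS
        · have hPq : P q := ⟨lt_of_le_of_lt (Finsupp.support_mono hc) hbP.1,
            p, hpq, hmem'⟩
          exact absurd (hmin q hPq) (not_le.mpr (wt_lt_wt hc hqb))
      rw [coeff_sub, coeff_monomial, coeff_monomial, if_neg hpc, if_neg hqc, sub_zero]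
    have hJIb : J ≤ avoidIdeal (K := K) (fun c => c ≤ b) hcond :=
      hSspan ▸ Ideal.span_le.mpr hSsub
    obtain ⟨_, b'', hb''ne, hb''J⟩ := hbP
    have hz := hJIb hb''J b le_rfl
    rw [coeff_sub, coeff_monomial, coeff_monomial, if_pos rfl, if_neg hb''ne] at hz
    simp at hz
  have heq := hE.2 b.support ⟨b, hbind, rfl⟩ (le_of_lt hbP.1)
  exact hbP.1.ne heq
variable {K : Type*} [Field K] {m : ℕ}

/-- the projection setting variables outside `E` to zero -/
def projE (E : Finset (Fin m)) : MvPolynomial (Fin m) K →ₐ[K] MvPolynomial (Fin m) K :=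
  aeval (fun i => if i ∈ E then X i else 0)

lemma projE_monomial_of_subset {E : Finset (Fin m)} {c : Fin m →₀ ℕ} (h : c.support ⊆ E)
    (a : K) : projE E (monomial c a) = monomial c a := by
  rw [projE, aeval_monomial, monomial_eq]
  congr 1
  rw [Finsupp.prod, Finsupp.prod]
  apply Finset.prod_congr rfl
  intro i hi
  rw [if_pos (h hi)]

lemma projE_monomial_of_not_subset {E : Finset (Fin m)} {c : Fin m →₀ ℕ}
    (h : ¬ c.support ⊆ E) (a : K) : projE E (monomial c a) = 0 := by
  rw [projE, aeval_monomial]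
  obtain ⟨i, hi, hiE⟩ := Finset.not_subset.mp h
  rw [Finsupp.prod]
  rw [Finset.prod_eq_zero hi (by rw [if_neg hiE, zero_pow (Finsupp.mem_support_iff.mp hi)])]
  rw [mul_zero]

lemma projE_eq_zero_of_avoid {E : Finset (Fin m)} {G : MvPolynomial (Fin m) K}
    (h : ∀ c : Fin m →₀ ℕ, c.support ⊆ E → coeff c G = 0) : projE E G = 0 := by
  conv_lhs => rw [(support_sum_monomial_coeff G).symm]
  rw [map_sum]
  apply Finset.sum_eq_zero
  intro c hc
  by_cases hsub : c.support ⊆ E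
  · rw [h c hsub]; simp
  · exact projE_monomial_of_not_subset hsub _
variable {K : Type*} [Field K] {m : ℕ}

lemma exists_support_eq
    {J : Ideal (MvPolynomial (Fin m) K)}
    {S₀ : Set (MvPolynomial (Fin m) K)} (hS₀ : ∀ f ∈ S₀, IsBinomial f)
    (hJ : J = Ideal.span S₀)
    {E : Finset (Fin m)} (hE : E ∈ Tmin J)
    {s : ℕ} {F : Fin s → MvPolynomial (Fin m) K}
    (hF : ∀ i, F i ∈ J ∧ IsCompletePolynomial J (F i))
    (hrad : (Ideal.span (Set.range F)).radical = J.radical) :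
    ∃ (i : Fin s) (f : Fin m →₀ ℕ), f ∈ (F i).support ∧ f.support = E := by
  by_contra hcontra
  push_neg at hcontra
  obtain ⟨⟨u, hu, huE⟩, hminE⟩ := hE
  -- a nontrivial binomial of J with monomial u
  have hspan' : Ideal.span (S₀ \ {0}) = J := by rw [span_diff_zero, hJ]
  obtain ⟨w, hw⟩ := hu (S₀ \ {0}) (fun f hf => hS₀ f hf.1) hspan'
  have hwu : w ≠ u ∧ (monomial u (1:K) - monomial w 1) ∈ J := by
    rcases hw with h | h
    · refine ⟨?_, ?_⟩
      · rintro rfl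
        exact h.2 (by simp)
      · have : (monomial u (1:K) - monomial w 1) ∈ Ideal.span S₀ := Ideal.subset_span h.1
        rwa [← hJ] at this
    · refine ⟨?_, ?_⟩
      · rintro rfl
        exact h.2 (by simp)
      · have : (monomial w (1:K) - monomial u 1) ∈ Ideal.span S₀ := Ideal.subset_span h.1
        rw [← hJ] at this
        have := J.neg_mem this
        rwa [neg_sub] at this
  obtain ⟨hwu_ne, hBJ⟩ := hwu
  -- all the `F i` avoid all exponents with support inside `E`
  have hFW : ∀ (i : Fin s) (c : Fin m →₀ ℕ), c.support ⊆ E → coeff c (F i) = 0 := by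
    intro i c hcE
    by_contra hc0
    have hcsupp : c ∈ (F i).support := by rwa [MvPolynomial.mem_support_iff]
    have hcE' : c.support ⊂ E := lt_of_le_of_ne hcE (hcontra i c hcsupp)
    by_cases hex : ∃ c' ∈ (F i).support, c' ≠ c
    · obtain ⟨c', hc', hc'ne⟩ := hex
      exact P_empty ⟨⟨u, hu, huE⟩, hminE⟩ ⟨c, c', hcE', hc'ne, (hF i).2 c hcsupp c' hc'⟩
    · push_neg at hex
      have hFi : F i = monomial c (coeff c (F i)) := by
        ext d
        rw [coeff_monomial]
        by_cases hdc : c = d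
        · subst hdc; rw [if_pos rfl]
        · rw [if_neg hdc]
          by_contra hd0
          exact hdc ((hex d (by rwa [MvPolynomial.mem_support_iff])).symm)
      have heval := eval_one_eq_zero hS₀ hJ (hF i).1
      rw [hFi, eval_monomial] at heval
      simp [Finsupp.prod] at heval
      exact hc0 heval
  -- the span of the F's is inside the avoidance ideal
  have hcond : ∀ c' c : Fin m →₀ ℕ, c' ≤ c → c.support ⊆ E → c'.support ⊆ E :=
    fun c' c hle h => (Finsupp.support_mono hle).trans h
  have hle : Ideal.span (Set.range F) ≤
      avoidIdeal (K := K) (fun c => c.support ⊆ E) hcond := by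
    rw [Ideal.span_le]
    rintro _ ⟨i, rfl⟩
    exact fun c hc => hFW i c hc
  -- radical membership gives a power in the span
  have hBrad : (monomial u (1:K) - monomial w 1) ∈ (Ideal.span (Set.range F)).radical := by
    rw [hrad]; exact Ideal.le_radical hBJ
  obtain ⟨k, hk⟩ := Ideal.mem_radical_iff.mp hBrad
  have hproj : projE (K := K) E ((monomial u (1:K) - monomial w 1)^k) = 0 :=
    projE_eq_zero_of_avoid (fun c hc => hle hk c hc)
  rw [map_pow] at hproj
  have hπB : projE (K := K) E (monomial u (1:K) - monomial w 1) ≠ 0 := by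
    rw [map_sub, projE_monomial_of_subset (le_of_eq huE)]
    by_cases hws : w.support ⊆ E
    · rw [projE_monomial_of_subset hws]
      intro h
      rw [sub_eq_zero] at h
      have h2 := congrArg (coeff u) h
      rw [coeff_monomial, coeff_monomial, if_pos rfl, if_neg hwu_ne] at h2
      exact one_ne_zero h2
    · rw [projE_monomial_of_not_subset hws, sub_zero]
      intro h
      have h2 := congrArg (coeff u) h
      rw [coeff_monomial, if_pos rfl] at h2
      simp at h2
  rcases Nat.eq_zero_or_pos k with rfl | hkpos
  · rw [pow_zero] at hproj
    exact one_ne_zero hproj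
  · exact hπB (pow_eq_zero_iff (Nat.pos_iff_ne_zero.mp hkpos) |>.mp hproj)
variable {K : Type*} [Field K] {m : ℕ}

lemma binomial_complete {J : Ideal (MvPolynomial (Fin m) K)} {f : MvPolynomial (Fin m) K}
    (hbin : IsBinomial f) (hfJ : f ∈ J) : IsCompletePolynomial J f := by
  obtain ⟨p, q, rfl⟩ := hbin
  intro a ha b hb
  have hsupp : (monomial p (1:K) - monomial q 1).support ⊆ {p} ∪ {q} :=
    subset_trans (support_sub _ _ _)
      (Finset.union_subset_union support_monomial_subset support_monomial_subset)
  have ha' : a = p ∨ a = q := by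
    have := hsupp ha; simpa using this
  have hb' : b = p ∨ b = q := by
    have := hsupp hb; simpa using this
  rcases ha' with rfl | rfl <;> rcases hb' with rfl | rfl
  · simpa using J.zero_mem
  · exact hfJ
  · have := J.neg_mem hfJ; rwa [neg_sub] at this
  · simpa using J.zero_mem

lemma araC_set_nonempty {J : Ideal (MvPolynomial (Fin m) K)}
    {S₀ : Set (MvPolynomial (Fin m) K)} (hS₀ : ∀ f ∈ S₀, IsBinomial f)
    (hJ : J = Ideal.span S₀) :
    ∃ (s : ℕ) (F : Fin s → MvPolynomial (Fin m) K),
      (∀ i, F i ∈ J ∧ IsCompletePolynomial J (F i)) ∧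
      (Ideal.span (Set.range F)).radical = J.radical := by
  obtain ⟨G, hG⟩ := IsNoetherian.noetherian J
  have hmem : ∀ g ∈ G, ∃ T : Finset (MvPolynomial (Fin m) K),
      ↑T ⊆ S₀ ∧ g ∈ Ideal.span (↑T : Set (MvPolynomial (Fin m) K)) := by
    intro g hg
    apply Submodule.mem_span_finite_of_mem_span
    show g ∈ Ideal.span S₀
    rw [← hJ, ← hG]
    exact Ideal.subset_span hg
  choose T hT1 hT2 using hmem
  classical
  let Tall : Finset (MvPolynomial (Fin m) K) := G.attach.biUnion (fun g => T g.1 g.2)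
  have hTsub : ↑Tall ⊆ S₀ := by
    intro x hx
    simp only [Tall, Finset.coe_biUnion, Set.mem_iUnion, Finset.mem_coe] at hx
    obtain ⟨g, _, hxg⟩ := hx
    exact hT1 g.1 g.2 hxg
  have hTspan : Ideal.span (↑Tall : Set (MvPolynomial (Fin m) K)) = J := by
    apply le_antisymm
    · rw [Ideal.span_le]
      intro x hx
      rw [hJ]
      exact Ideal.subset_span (hTsub hx)
    · rw [← hG]
      show Ideal.span (↑G : Set (MvPolynomial (Fin m) K)) ≤ _
      rw [Ideal.span_le]
      intro g hg
      have : Ideal.span (↑(T g hg) : Set (MvPolynomial (Fin m) K)) ≤ Ideal.span ↑Tall := by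
        apply Ideal.span_mono
        intro x hx
        simp only [Tall, Finset.coe_biUnion, Set.mem_iUnion, Finset.mem_coe]
        exact ⟨⟨g, hg⟩, Finset.mem_attach _ _, hx⟩
      exact this (hT2 g hg)
  refine ⟨Tall.card, fun i => (Tall.equivFin.symm i : MvPolynomial (Fin m) K), ?_, ?_⟩
  · intro i
    have hmemT : ((Tall.equivFin.symm i : {x // x ∈ Tall}) : MvPolynomial (Fin m) K) ∈ Tall :=
      (Tall.equivFin.symm i).2
    have hJm : ((Tall.equivFin.symm i : {x // x ∈ Tall}) : MvPolynomial (Fin m) K) ∈ J := by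
      rw [← hTspan]
      exact Ideal.subset_span hmemT
    exact ⟨hJm, binomial_complete (hS₀ _ (hTsub hmemT)) hJm⟩
  · have hrange : Set.range (fun i => ((Tall.equivFin.symm i : {x // x ∈ Tall}) :
        MvPolynomial (Fin m) K)) = ↑Tall := by
      ext x
      constructor
      · rintro ⟨i, rfl⟩
        exact (Tall.equivFin.symm i).2
      · intro hx
        exact ⟨Tall.equivFin ⟨x, hx⟩, by simp⟩
    rw [hrange, hTspan]
variable {K : Type*} [Field K] {m : ℕ}

lemma deltaQ_le {J : Ideal (MvPolynomial (Fin m) K)}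
    {S₀ : Set (MvPolynomial (Fin m) K)} (hS₀ : ∀ f ∈ S₀, IsBinomial f)
    (hJ : J = Ideal.span S₀) {s : ℕ} (F : Fin s → MvPolynomial (Fin m) K)
    (hF : ∀ i, F i ∈ J ∧ IsCompletePolynomial J (F i))
    (hrad : (Ideal.span (Set.range F)).radical = J.radical) :
    deltaQ J Set.univ ≤ s := by
  classical
  have hfin : (Tmin J).Finite := Set.toFinite _
  set Vfin : Finset (Finset (Fin m)) := hfin.toFinset with hVfin
  set Q : Fin s → Finset (Fin m) → Prop :=
    fun i E => ∃ f, f ∈ (F i).support ∧ f.support = E with hQ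
  set mins : Finset (Fin m) → Finset (Fin s) :=
    fun E => Finset.univ.filter (fun i => Q i E) with hmins
  have hminsne : ∀ E ∈ Tmin J, (mins E).Nonempty := by
    intro E hE
    obtain ⟨i, f, h1, h2⟩ := exists_support_eq hS₀ hJ hE hF hrad
    exact ⟨i, Finset.mem_filter.mpr ⟨Finset.mem_univ i, ⟨f, h1, h2⟩⟩⟩
  set Tpart : Fin s → Finset (Finset (Fin m)) :=
    fun i => Vfin.filter (fun E => ∃ h : (mins E).Nonempty, (mins E).min' h = i) with hTpart
  have hTmem : ∀ i E, E ∈ Tpart i → E ∈ Tmin J ∧ Q i E := by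
    intro i E hE
    obtain ⟨hV, hne, hmi⟩ := Finset.mem_filter.mp hE
    refine ⟨(Set.Finite.mem_toFinset hfin).mp hV, ?_⟩
    have hm := Finset.min'_mem (mins E) hne
    rw [hmi] at hm
    exact (Finset.mem_filter.mp hm).2
  have hsimplex : ∀ i : Fin s, (Tpart i).Nonempty → IsSimplex J (Tpart i) := by
    intro i hne
    refine ⟨hne, fun E hE => (hTmem i E hE).1, ?_⟩
    refine ⟨fun E => if h : Q i E then h.choose else 0, ?_, ?_⟩
    · intro E hE
      have hQE := (hTmem i E hE).2
      dsimp only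
      rw [dif_pos hQE]
      exact hQE.choose_spec.2
    · intro E hE E' hE'
      have hQE := (hTmem i E hE).2
      have hQE' := (hTmem i E' hE').2
      dsimp only
      rw [dif_pos hQE, dif_pos hQE']
      exact (hF i).2 _ hQE.choose_spec.1 _ hQE'.choose_spec.1
  set N : Finset (Finset (Finset (Fin m))) :=
    (Finset.univ.image (fun i => Tpart i)).filter (fun T => T.Nonempty) with hN
  have hNdesc : ∀ T ∈ N, ∃ i, T = Tpart i ∧ T.Nonempty := by
    intro T hT
    obtain ⟨hT1, hT2⟩ := Finset.mem_filter.mp hT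
    obtain ⟨i, _, rfl⟩ := Finset.mem_image.mp hT1
    exact ⟨i, rfl, hT2⟩
  have hNmatch : IsQMatching J Set.univ N := by
    constructor
    · intro T hT
      obtain ⟨i, rfl, hne⟩ := hNdesc T hT
      exact ⟨hsimplex i hne, Set.mem_univ _⟩
    · intro T hT T' hT' hTT'
      obtain ⟨i, rfl, _⟩ := hNdesc T hT
      obtain ⟨j, rfl, _⟩ := hNdesc T' hT'
      have hij : i ≠ j := fun h => hTT' (by rw [h])
      rw [Finset.disjoint_left]
      intro E hEi hEj
      obtain ⟨_, hne1, hmi⟩ := Finset.mem_filter.mp hEi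
      obtain ⟨_, hne2, hmj⟩ := Finset.mem_filter.mp hEj
      exact hij (hmi ▸ hmj ▸ rfl)
  have hsup : N.sup id = Vfin := by
    apply le_antisymm
    · apply Finset.sup_le
      intro T hT
      obtain ⟨i, rfl, _⟩ := hNdesc T hT
      exact Finset.filter_subset _ _
    · intro E hEV
      have hE : E ∈ Tmin J := (Set.Finite.mem_toFinset hfin).mp hEV
      have hne := hminsne E hE
      set i0 := (mins E).min' hne with hi0
      have hET : E ∈ Tpart i0 := Finset.mem_filter.mpr ⟨hEV, hne, rfl⟩
      have hTN : Tpart i0 ∈ N := Finset.mem_filter.mpr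
        ⟨Finset.mem_image.mpr ⟨i0, Finset.mem_univ i0, rfl⟩, ⟨E, hET⟩⟩
      exact (Finset.le_sup (f := id) hTN : Tpart i0 ≤ N.sup id) hET
  have hNmax : IsMaximalQMatching J Set.univ N := by
    refine ⟨hNmatch, ?_⟩
    intro N' hN'
    apply Finset.card_le_card
    rw [hsup]
    show N'.sup id ≤ Vfin
    apply Finset.sup_le
    intro T hT
    intro E hE
    exact (Set.Finite.mem_toFinset hfin).mpr (((hN'.1 T hT).1).2.1 E hE)
  have hcard : N.card ≤ s := by
    calc N.card ≤ (Finset.univ.image (fun i => Tpart i)).card :=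
          Finset.card_le_card (Finset.filter_subset _ _)
      _ ≤ (Finset.univ : Finset (Fin s)).card := Finset.card_image_le
      _ = s := by simp
  exact le_trans (Nat.sInf_le ⟨N, hNmax, rfl⟩) hcard


end Stmt2Aux

theorem stmt_2 (K : Type*) [Field K] (m : ℕ) (J : Ideal (MvPolynomial (Fin m) K))
    -- `J` is generated by binomials
    (S₀ : Set (MvPolynomial (Fin m) K)) (hS₀ : ∀ f ∈ S₀, IsBinomial f)
    (hJ : J = Ideal.span S₀)
    -- `J` contains no binomial `x^u − 1` with `u ≠ 0`
    (hno : ∀ u : Fin m →₀ ℕ, u ≠ 0 → (monomial u (1 : K) - 1) ∉ J) :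
    deltaQ J Set.univ ≤ araC J := by
  have hA : {s | ∃ F : Fin s → MvPolynomial (Fin m) K,
      (∀ i, F i ∈ J ∧ IsCompletePolynomial J (F i)) ∧
      (Ideal.span (Set.range F)).radical = J.radical}.Nonempty := by
    obtain ⟨s0, F0, h1, h2⟩ := Stmt2Aux.araC_set_nonempty hS₀ hJ
    exact ⟨s0, F0, h1, h2⟩
  have hmem : araC J ∈ {s | ∃ F : Fin s → MvPolynomial (Fin m) K,
      (∀ i, F i ∈ J ∧ IsCompletePolynomial J (F i)) ∧
      (Ideal.span (Set.range F)).radical = J.radical} := Nat.sInf_mem hA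
  obtain ⟨F, hF, hrad⟩ := hmem
  exact Stmt2Aux.deltaQ_le hS₀ hJ F hF hrad
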